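/- Let k be a field, d ≥ 1, and φ a form of degree d in n variables over k. Over the rational function field K = k(t), the form ⟨1,t,t²,...,t^{d-1}⟩ ⊗ φ = φ(X₀) + t·φ(X₁) + t²·φ(X₂) + ... + t^{d-1}·φ(X_{d-1}) in dn variables is anisotropic over K if and only if φ is anisotropic over k. -/

import Mathlib

open MvPolynomial

/-- A form (polynomial) is anisotropic if its only zero is the trivial one. -/
def Anisotropic {k : Type*} [CommSemiring k] {σ : Type*} (φ : MvPolynomial σ k) : Prop :=
  ∀ x : σ → k, eval x φ = 0 → x = 0

section Aux

/-- Scaling a homogeneous polynomial's variables by `c` multiplies the value by `c ^ m`. -/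
lemma eval_mul_pow_of_isHomogeneous {R σ : Type*} [CommSemiring R] {φ : MvPolynomial σ R}
    {m : ℕ} (h : φ.IsHomogeneous m) (c : R) (x : σ → R) :
    eval (fun i => c * x i) φ = c ^ m * eval x φ := by
  rw [eval_eq, eval_eq, Finset.mul_sum]
  refine Finset.sum_congr rfl fun s hs => ?_
  have hdeg : ∑ i ∈ s.support, s i = m := by
    have h1 := h (mem_support_iff.mp hs)
    rw [← h1, Finsupp.weight_apply]
    simp [Finsupp.sum]
  rw [Finset.prod_congr rfl (fun i _ => mul_pow c (x i) (s i)), Finset.prod_mul_distrib,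
    Finset.prod_pow_eq_pow_sum, hdeg]
  ring

variable {k : Type*} [Field k] {n : ℕ}

/-- The polynomial-coefficient version of the Springer form. -/
noncomputable def Fm (d : ℕ) (φ : MvPolynomial (Fin n) k) (z : ℕ → Fin n → Polynomial k) :
    Polynomial k :=
  ∑ j ∈ Finset.range d, Polynomial.X ^ j * eval (z j) (map Polynomial.C φ)

lemma eval_zero_eval (φ : MvPolynomial (Fin n) k) (x : Fin n → Polynomial k) :
    Polynomial.eval 0 (eval x (map Polynomial.C φ)) =
      eval (fun i => Polynomial.eval 0 (x i)) φ := by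
  rw [eval_map, ← Polynomial.coe_evalRingHom, eval₂_comp_left]
  have h1 : (Polynomial.evalRingHom (0 : k)).comp Polynomial.C = RingHom.id k := by
    ext a; simp
  rw [h1, eval₂_id]
  rfl

variable {d : ℕ}

lemma step_eval (hd : 1 ≤ d) {φ : MvPolynomial (Fin n) k} (hani : Anisotropic φ)
    (z : ℕ → Fin n → Polynomial k) (hz : Fm d φ z = 0) :
    ∀ i, (z 0 i).coeff 0 = 0 := by
  have h := congrArg (Polynomial.eval 0) hz
  rw [Fm, Polynomial.eval_finset_sum] at h
  simp only [Polynomial.eval_mul, Polynomial.eval_pow, Polynomial.eval_X, Polynomial.eval_zero,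
    eval_zero_eval] at h
  rw [Finset.sum_eq_single_of_mem 0 (Finset.mem_range.mpr hd)
    (fun b _ hb => by simp [zero_pow hb])] at h
  simp only [pow_zero, one_mul] at h
  have h2 := hani _ h
  intro i
  rw [Polynomial.coeff_zero_eq_eval_zero]
  exact congrFun h2 i

lemma shift_eval (hd : 1 ≤ d) {φ : MvPolynomial (Fin n) k} (hφ : φ.IsHomogeneous d)
    (z : ℕ → Fin n → Polynomial k) (w : Fin n → Polynomial k)
    (h0 : ∀ i, z 0 i = Polynomial.X * w i) :
    Fm d φ z = Polynomial.X * Fm d φ (fun m => if m = d - 1 then w else z (m + 1)) := by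
  obtain ⟨e, rfl⟩ : ∃ e, d = e + 1 := ⟨d - 1, (Nat.succ_pred_eq_of_pos hd).symm⟩
  rw [Fm, Fm, Finset.sum_range_succ' _ e, Finset.sum_range_succ _ e, mul_add, Finset.mul_sum]
  congr 1
  · refine Finset.sum_congr rfl fun j hj => ?_
    have hj' : j < e := Finset.mem_range.mp hj
    have : ¬ (j = e + 1 - 1) := by omega
    rw [if_neg this]
    ring
  · have hz0 : z 0 = fun i => Polynomial.X * w i := funext h0
    rw [hz0, eval_mul_pow_of_isHomogeneous (hφ.map Polynomial.C), if_pos (by omega : e = e + 1 - 1)]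
    ring

lemma coeff_zero_of_Fm_eq_zero (hd : 1 ≤ d) {φ : MvPolynomial (Fin n) k}
    (hφ : φ.IsHomogeneous d) (hani : Anisotropic φ)
    (z : ℕ → Fin n → Polynomial k) (hz : Fm d φ z = 0) :
    ∀ j < d, ∀ i, (z j i).coeff 0 = 0 := by
  have D : ∀ s : ℕ, ∃ u : ℕ → Fin n → Polynomial k,
      Fm d φ u = 0 ∧ ∀ m, m + s < d → u m = z (m + s) := by
    intro s
    induction s with
    | zero => exact ⟨z, hz, fun m _ => by rw [Nat.add_zero]⟩
    | succ s ih =>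
      obtain ⟨u, hu0, hu⟩ := ih
      have hc : ∀ i, (u 0 i).coeff 0 = 0 := step_eval hd hani u hu0
      have h0 : ∀ i, u 0 i = Polynomial.X * (u 0 i).divX := by
        intro i
        conv_lhs => rw [← Polynomial.X_mul_divX_add (u 0 i)]
        rw [hc i]; simp
      have hshift := shift_eval hd hφ u (fun i => (u 0 i).divX) h0
      rw [hu0] at hshift
      refine ⟨_, (mul_eq_zero.mp hshift.symm).resolve_left Polynomial.X_ne_zero, fun m hm => ?_⟩
      have hne : ¬ (m = d - 1) := by omega
      rw [if_neg hne, hu (m + 1) (by omega), show m + 1 + s = m + (s + 1) from by omega]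
  intro j hj i
  obtain ⟨u, hu0, hu⟩ := D j
  have := step_eval hd hani u hu0 i
  rwa [hu 0 (by omega), Nat.zero_add] at this

open Classical in
/-- weight of a polynomial used for the descent. -/
noncomputable def pweight (p : Polynomial k) : ℕ := if p = 0 then 0 else p.natDegree + 1

lemma pweight_divX_lt {p : Polynomial k} (h0 : p.coeff 0 = 0) (hp : p ≠ 0) :
    pweight p.divX < pweight p := by
  have hdvd : p = Polynomial.X * p.divX := by
    conv_lhs => rw [← Polynomial.X_mul_divX_add p]
    rw [h0]; simp
  have hdiv : p.divX ≠ 0 := by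
    intro h; rw [h, mul_zero] at hdvd; exact hp hdvd
  have hdeg : 1 ≤ p.natDegree := by
    by_contra hlt
    have : p.natDegree = 0 := by omega
    have := Polynomial.eq_C_of_natDegree_eq_zero this
    rw [this, h0, map_zero] at hp
    exact hp rfl
  rw [pweight, pweight, if_neg hdiv, if_neg hp, Polynomial.natDegree_divX_eq_natDegree_tsub_one]
  omega

lemma descend (hd : 1 ≤ d) {φ : MvPolynomial (Fin n) k}
    (hφ : φ.IsHomogeneous d) (hani : Anisotropic φ) :
    ∀ (N : ℕ) (z : ℕ → Fin n → Polynomial k),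
      (∑ p ∈ Finset.range d ×ˢ (Finset.univ : Finset (Fin n)), pweight (z p.1 p.2)) ≤ N →
      Fm d φ z = 0 → ∀ j < d, ∀ i, z j i = 0 := by
  intro N
  induction N with
  | zero =>
    intro z hM hz j hj i
    have hmem : (j, i) ∈ Finset.range d ×ˢ (Finset.univ : Finset (Fin n)) :=
      Finset.mem_product.mpr ⟨Finset.mem_range.mpr hj, Finset.mem_univ i⟩
    have h0 := Finset.sum_eq_zero_iff.mp (Nat.le_zero.mp hM) (j, i) hmem
    by_contra hne
    rw [pweight, if_neg hne] at h0
    omega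
  | succ N ih =>
    intro z hM hz j hj i
    by_cases hzero : ∀ j' < d, ∀ i', z j' i' = 0
    · exact hzero j hj i
    · push_neg at hzero
      obtain ⟨j0, hj0, i0, hne⟩ := hzero
      have hc := coeff_zero_of_Fm_eq_zero hd hφ hani z hz
      set w : ℕ → Fin n → Polynomial k := fun j i => (z j i).divX with hw
      have hz0 : ∀ j' < d, ∀ i', z j' i' = Polynomial.X * w j' i' := by
        intro j' hj' i'
        conv_lhs => rw [← Polynomial.X_mul_divX_add (z j' i')]
        rw [hc j' hj' i']; simp; rfl
      have hFw : Fm d φ z = Polynomial.X ^ d * Fm d φ w := by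
        rw [Fm, Fm, Finset.mul_sum]
        refine Finset.sum_congr rfl fun j' hj' => ?_
        have hj'' := Finset.mem_range.mp hj'
        have : z j' = fun i' => Polynomial.X * w j' i' := funext (hz0 j' hj'')
        rw [this, eval_mul_pow_of_isHomogeneous (hφ.map Polynomial.C)]
        ring
      rw [hz] at hFw
      have hFw0 : Fm d φ w = 0 :=
        (mul_eq_zero.mp hFw.symm).resolve_left (pow_ne_zero d Polynomial.X_ne_zero)
      have hlt : (∑ p ∈ Finset.range d ×ˢ (Finset.univ : Finset (Fin n)), pweight (w p.1 p.2)) <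
          ∑ p ∈ Finset.range d ×ˢ (Finset.univ : Finset (Fin n)), pweight (z p.1 p.2) := by
        refine Finset.sum_lt_sum (fun p hp => ?_)
          ⟨(j0, i0), Finset.mem_product.mpr ⟨Finset.mem_range.mpr hj0, Finset.mem_univ i0⟩, ?_⟩
        · have hp1 := Finset.mem_range.mp (Finset.mem_product.mp hp).1
          by_cases h : z p.1 p.2 = 0
          · rw [hw]; simp [h, Polynomial.divX_zero]
          · exact le_of_lt (pweight_divX_lt (hc p.1 hp1 p.2) h)
        · exact pweight_divX_lt (hc j0 hj0 i0) hne
      have hMw : (∑ p ∈ Finset.range d ×ˢ (Finset.univ : Finset (Fin n)), pweight (w p.1 p.2)) ≤ N := by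
        omega
      have hwz := ih w hMw hFw0
      rw [hz0 j hj i, hwz j hj i, mul_zero]

end Aux

theorem stmt_10 {k : Type*} [Field k] {n d : ℕ} (hd : 1 ≤ d)
    (φ : MvPolynomial (Fin n) k) (hφ : φ.IsHomogeneous d) :
    Anisotropic (∑ j : Fin d, C (RatFunc.X ^ (j : ℕ)) *
        rename (fun i => (j, i)) (map (RatFunc.C : k →+* RatFunc k) φ) :
      MvPolynomial (Fin d × Fin n) (RatFunc k)) ↔ Anisotropic φ := by
  haveI : NeZero d := ⟨by omega⟩
  set Φ : MvPolynomial (Fin d × Fin n) (RatFunc k) :=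
    ∑ j : Fin d, C (RatFunc.X ^ (j : ℕ)) *
      rename (fun i => (j, i)) (map (RatFunc.C : k →+* RatFunc k) φ) with hΦ
  set Ψ : MvPolynomial (Fin d × Fin n) (Polynomial k) :=
    ∑ j : Fin d, C (Polynomial.X ^ (j : ℕ)) *
      rename (fun i => (j, i)) (map Polynomial.C φ) with hΨ
  have hΨmap : map (algebraMap (Polynomial k) (RatFunc k)) Ψ = Φ := by
    rw [hΨ, hΦ, map_sum]
    refine Finset.sum_congr rfl fun j _ => ?_
    rw [_root_.map_mul, MvPolynomial.map_C, map_pow, RatFunc.algebraMap_X, map_rename,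
      map_map]
    congr 1
  have hΦhom : Φ.IsHomogeneous d := by
    rw [hΦ]
    refine IsHomogeneous.sum _ _ _ fun j _ => ?_
    exact ((hφ.map _).rename_isHomogeneous).C_mul _
  have hevalΦ : ∀ y : Fin d × Fin n → RatFunc k,
      eval y Φ = ∑ j : Fin d, RatFunc.X ^ (j : ℕ) *
        eval (fun i => y (j, i)) (map (RatFunc.C : k →+* RatFunc k) φ) := by
    intro y
    rw [hΦ, map_sum (eval y)]
    refine Finset.sum_congr rfl fun j _ => ?_
    rw [eval_mul, eval_C, eval_rename]
    rfl
  constructor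
  · -- big anisotropic → φ anisotropic
    intro hbig x hx
    set y : Fin d × Fin n → RatFunc k :=
      fun v => if v.1 = 0 then RatFunc.C (x v.2) else 0 with hy
    have hcoeff0 : constantCoeff φ = 0 := by
      have h0 : coeff 0 φ = 0 := hφ.coeff_eq_zero (by simp; omega)
      simpa [constantCoeff_eq] using h0
    have hev : eval y Φ = 0 := by
      rw [hevalΦ]
      refine Finset.sum_eq_zero fun j _ => ?_
      by_cases hj : j = 0
      · subst hj
        have : (fun i => y ((0 : Fin d), i)) = fun i => RatFunc.C (x i) := by
          funext i; simp [hy]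
        rw [this, eval_map]
        have h5 : RatFunc.C (eval x φ) =
            eval₂ (RatFunc.C : k →+* RatFunc k) (fun i => RatFunc.C (x i)) φ := by
          have h4 := eval₂_comp_left (RatFunc.C : k →+* RatFunc k) (RingHom.id k) x φ
          rw [eval₂_id, RingHom.comp_id] at h4
          exact h4
        rw [← h5, hx, map_zero, mul_zero]
      · have : (fun i => y (j, i)) = (fun _ => 0 : Fin n → RatFunc k) := by
          funext i; simp [hy, hj]
        rw [this, eval_zero', constantCoeff_map, hcoeff0, map_zero, mul_zero]
    have hy0 := hbig y hev
    funext i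
    have := congrFun hy0 ((0 : Fin d), i)
    simp only [hy, if_pos rfl] at this
    have hCinj : Function.Injective (RatFunc.C : k →+* RatFunc k) := by
      intro a b hab
      have := RatFunc.algebraMap_injective k
        (by rw [RatFunc.algebraMap_C, RatFunc.algebraMap_C, hab] :
          algebraMap (Polynomial k) (RatFunc k) (Polynomial.C a) =
          algebraMap (Polynomial k) (RatFunc k) (Polynomial.C b))
      exact Polynomial.C_injective this
    exact hCinj (by simpa using this)
  · -- φ anisotropic → big anisotropic
    intro hani y hy
    obtain ⟨b, hb⟩ := IsLocalization.exist_integer_multiples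
      (nonZeroDivisors (Polynomial k)) Finset.univ y
    have hb' : ∀ v, ∃ p : Polynomial k,
        algebraMap (Polynomial k) (RatFunc k) p = (b : Polynomial k) • y v :=
      fun v => hb v (Finset.mem_univ v)
    choose zf hzf using hb'
    have hbne : algebraMap (Polynomial k) (RatFunc k) (b : Polynomial k) ≠ 0 := by
      intro h
      have := (RatFunc.algebraMap_injective k) (h.trans (map_zero _).symm)
      exact nonZeroDivisors.coe_ne_zero b this
    have halg : ∀ v, algebraMap (Polynomial k) (RatFunc k) (zf v) =
        algebraMap (Polynomial k) (RatFunc k) (b : Polynomial k) * y v := by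
      intro v; rw [hzf v, Algebra.smul_def]
    have hevalΨ : algebraMap (Polynomial k) (RatFunc k) (eval zf Ψ) = 0 := by
      have h1 : algebraMap (Polynomial k) (RatFunc k) (eval zf Ψ) =
          eval (fun v => algebraMap (Polynomial k) (RatFunc k) (zf v)) Φ := by
        rw [← hΨmap, eval_map]
        have h1' := eval₂_comp_left (algebraMap (Polynomial k) (RatFunc k))
          (RingHom.id (Polynomial k)) zf Ψ
        rw [eval₂_id, RingHom.comp_id] at h1'
        exact h1'
      rw [h1]
      have h2 : (fun v => algebraMap (Polynomial k) (RatFunc k) (zf v)) =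
          fun v => algebraMap (Polynomial k) (RatFunc k) (b : Polynomial k) * y v :=
        funext halg
      rw [h2, eval_mul_pow_of_isHomogeneous hΦhom, hy, mul_zero]
    have hΨ0 : eval zf Ψ = 0 := (RatFunc.algebraMap_injective k)
      (hevalΨ.trans (map_zero _).symm)
    -- convert to Fm
    set zz : ℕ → Fin n → Polynomial k :=
      fun j i => if h : j < d then zf (⟨j, h⟩, i) else 0 with hzz
    have hFm : Fm d φ zz = eval zf Ψ := by
      rw [Fm, hΨ, map_sum (eval zf),
        ← Fin.sum_univ_eq_sum_range (fun j => Polynomial.X ^ j * eval (zz j) (map Polynomial.C φ)) d]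
      refine Finset.sum_congr rfl fun j _ => ?_
      rw [eval_mul, eval_C, eval_rename]
      have hzzj : zz (j : ℕ) = zf ∘ (fun i => (j, i)) := by
        funext i
        simp only [hzz, Function.comp, dif_pos j.isLt, Fin.eta]
      rw [hzzj]
    rw [hΨ0] at hFm
    have hzz0 := descend hd hφ hani _ zz le_rfl hFm
    have hzf0 : ∀ v, zf v = 0 := by
      intro v
      have := hzz0 v.1 v.1.isLt v.2
      simpa only [hzz, dif_pos v.1.isLt, Fin.eta] using this
    funext v
    have h3 := halg v
    rw [hzf0 v, map_zero] at h3
    exact (mul_eq_zero.mp h3.symm).resolve_left hbne
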